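/- Let Mₙ(λ) = E[e^{λ Lₙ}] under the uniform measure on 231-avoiding permutations of [n] (M₀ = 1), where Lₙ is the longest increasing subsequence length. Then for n ≥ 2, Cₙ·Mₙ(λ) = Σ_{j=1}^{n−1} C_{j−1}M_{j−1}(λ)·C_{n−j}M_{n−j}(λ) + e^λ·C_{n−1}M_{n−1}(λ). -/

import Mathlib

open Equiv Filter Real Set

def Contains {n m : ℕ} (σ : Equiv.Perm (Fin n)) (η : Equiv.Perm (Fin m)) : Prop :=
  ∃ f : Fin m → Fin n, StrictMono f ∧ ∀ j k, σ (f j) < σ (f k) ↔ η j < η k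

def Avoids {n m : ℕ} (σ : Equiv.Perm (Fin n)) (η : Equiv.Perm (Fin m)) : Prop := ¬ Contains σ η

def Avoids231 {n : ℕ} (σ : Equiv.Perm (Fin n)) : Prop :=
  ¬ ∃ i₁ i₂ i₃ : Fin n, i₁ < i₂ ∧ i₂ < i₃ ∧ σ i₃ < σ i₁ ∧ σ i₁ < σ i₂

def Avoids132 {n : ℕ} (σ : Equiv.Perm (Fin n)) : Prop :=
  ¬ ∃ i₁ i₂ i₃ : Fin n, i₁ < i₂ ∧ i₂ < i₃ ∧ σ i₁ < σ i₃ ∧ σ i₃ < σ i₂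

def Avoids213 {n : ℕ} (σ : Equiv.Perm (Fin n)) : Prop :=
  ¬ ∃ i₁ i₂ i₃ : Fin n, i₁ < i₂ ∧ i₂ < i₃ ∧ σ i₂ < σ i₁ ∧ σ i₁ < σ i₃

def Avoids312 {n : ℕ} (σ : Equiv.Perm (Fin n)) : Prop :=
  ¬ ∃ i₁ i₂ i₃ : Fin n, i₁ < i₂ ∧ i₂ < i₃ ∧ σ i₂ < σ i₃ ∧ σ i₃ < σ i₁

/-- `f` indexes an alternating subsequence of `σ`. -/
def IsAltSub {n k : ℕ} (σ : Equiv.Perm (Fin n)) (f : Fin k → Fin n) : Prop :=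
  StrictMono f ∧ ∀ (j : ℕ) (h : j + 2 < k),
    (σ (f ⟨j, by omega⟩) < σ (f ⟨j + 1, by omega⟩) ↔
      ¬ σ (f ⟨j + 1, by omega⟩) < σ (f ⟨j + 2, by omega⟩))

/-- The length of the longest alternating subsequence. -/
noncomputable def altLen {n : ℕ} (σ : Equiv.Perm (Fin n)) : ℕ :=
  sSup {k | ∃ f : Fin k → Fin n, IsAltSub σ f}

/-- `f` indexes an alternating subsequence beginning with an ascent and ending with a descent. -/
def IsAltPM {n k : ℕ} (σ : Equiv.Perm (Fin n)) (f : Fin k → Fin n) : Prop :=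
  IsAltSub σ f ∧ 3 ≤ k ∧ Odd k ∧
    (∀ (h : 3 ≤ k), σ (f ⟨0, by omega⟩) < σ (f ⟨1, by omega⟩)) ∧
    (∀ (h : 3 ≤ k), σ (f ⟨k - 1, by omega⟩) < σ (f ⟨k - 2, by omega⟩))

/-- The length `A^{+,-}` of the longest alternating subsequence beginning with an ascent and
ending with a descent; `1` if there is no such subsequence, and `0` when `n = 0`. -/
noncomputable def apm {n : ℕ} (σ : Equiv.Perm (Fin n)) : ℕ :=
  if n = 0 then 0 else max (sSup {k | ∃ f : Fin k → Fin n, IsAltPM σ f}) 1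

/-- The length of the longest increasing subsequence. -/
noncomputable def lisLen {n : ℕ} (σ : Equiv.Perm (Fin n)) : ℕ :=
  sSup {k | ∃ f : Fin k → Fin n, StrictMono f ∧ StrictMono (⇑σ ∘ f)}

open scoped Classical in
/-- The moment generating function of `A_n` under the uniform 231-avoiding measure. -/
noncomputable def Malt (n : ℕ) (lam : ℝ) : ℝ :=
  (∑ σ ∈ Finset.univ.filter (fun σ : Equiv.Perm (Fin n) => Avoids231 σ),
    Real.exp (lam * altLen σ)) / (catalan n)

open scoped Classical in
noncomputable def Mapm (n : ℕ) (lam : ℝ) : ℝ :=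
  (∑ σ ∈ Finset.univ.filter (fun σ : Equiv.Perm (Fin n) => Avoids231 σ),
    Real.exp (lam * apm σ)) / (catalan n)

open scoped Classical in
noncomputable def Minc (n : ℕ) (lam : ℝ) : ℝ :=
  (∑ σ ∈ Finset.univ.filter (fun σ : Equiv.Perm (Fin n) => Avoids231 σ),
    Real.exp (lam * lisLen σ)) / (catalan n)

namespace CatRec

open Equiv

variable {n a b : ℕ}

def lisSet {n : ℕ} (σ : Perm (Fin n)) : Set ℕ :=
  {k | ∃ f : Fin k → Fin n, StrictMono f ∧ StrictMono (⇑σ ∘ f)}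

lemma lisLen_def (σ : Perm (Fin n)) : lisLen σ = sSup (lisSet σ) := rfl

lemma zero_mem_lisSet (σ : Perm (Fin n)) : 0 ∈ lisSet σ := by
  refine ⟨fun x => x.elim0, ?_, ?_⟩ <;> exact fun x => x.elim0

lemma lisSet_le (σ : Perm (Fin n)) {k : ℕ} (hk : k ∈ lisSet σ) : k ≤ n := by
  obtain ⟨f, hf, -⟩ := hk
  simpa using Fintype.card_le_of_injective f hf.injective

lemma bddAbove_lisSet (σ : Perm (Fin n)) : BddAbove (lisSet σ) :=
  ⟨n, fun _ hk => lisSet_le σ hk⟩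

lemma le_lisLen (σ : Perm (Fin n)) {k : ℕ} (hk : k ∈ lisSet σ) : k ≤ lisLen σ :=
  le_csSup (bddAbove_lisSet σ) hk

lemma lisLen_mem (σ : Perm (Fin n)) : lisLen σ ∈ lisSet σ :=
  Nat.sSup_mem ⟨0, zero_mem_lisSet σ⟩ (bddAbove_lisSet σ)

lemma lisLen_le (σ : Perm (Fin n)) {m : ℕ} (hm : ∀ k ∈ lisSet σ, k ≤ m) : lisLen σ ≤ m :=
  csSup_le ⟨0, zero_mem_lisSet σ⟩ hm

lemma one_le_lisLen (σ : Perm (Fin n)) (hn : n ≠ 0) : 1 ≤ lisLen σ := by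
  refine le_lisLen σ ⟨fun _ => ⟨0, by omega⟩, ?_, ?_⟩ <;>
  · intro x y hxy
    exact absurd (Subsingleton.elim x y) (ne_of_lt hxy)

lemma lisLen_zero (σ : Perm (Fin 0)) : lisLen σ = 0 :=
  Nat.le_zero.mp (lisLen_le σ fun _ hk => lisSet_le σ hk)

/-- The glued permutation: `τ` on positions `< a` (values `< a`), top value `a+b = n-1`
at position `a`, and `ρ` (shifted) on positions `> a` (values in `[a, a+b)`). -/
def glueFun (h : n = a + 1 + b) (τ : Perm (Fin a)) (ρ : Perm (Fin b)) (i : Fin n) : Fin n :=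
  if hi : (i : ℕ) < a then ⟨(τ ⟨i, hi⟩ : ℕ), by have := (τ ⟨i, hi⟩).isLt; omega⟩
  else if hi2 : (i : ℕ) = a then ⟨a + b, by omega⟩
  else ⟨a + (ρ ⟨(i : ℕ) - (a + 1), by have := i.isLt; omega⟩ : ℕ),
    by have := (ρ ⟨(i : ℕ) - (a + 1), by have := i.isLt; omega⟩).isLt; omega⟩

lemma glueFun_val_of_lt (h : n = a + 1 + b) (τ : Perm (Fin a)) (ρ : Perm (Fin b)) {i : Fin n}
    (hi : (i : ℕ) < a) : (glueFun h τ ρ i : ℕ) = τ ⟨i, hi⟩ := by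
  simp [glueFun, dif_pos hi]

lemma glueFun_val_of_eq (h : n = a + 1 + b) (τ : Perm (Fin a)) (ρ : Perm (Fin b)) {i : Fin n}
    (hi : (i : ℕ) = a) : (glueFun h τ ρ i : ℕ) = a + b := by
  simp [glueFun, hi]

lemma glueFun_val_of_gt (h : n = a + 1 + b) (τ : Perm (Fin a)) (ρ : Perm (Fin b)) {i : Fin n}
    (hi : a < (i : ℕ)) :
    (glueFun h τ ρ i : ℕ) = a + ρ ⟨(i : ℕ) - (a + 1), by have := i.isLt; omega⟩ := by
  unfold glueFun
  rw [dif_neg (by omega), dif_neg (by omega)]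

lemma glueFun_injective (h : n = a + 1 + b) (τ : Perm (Fin a)) (ρ : Perm (Fin b)) :
    Function.Injective (glueFun h τ ρ) := by
  intro i j hij
  have key := congrArg Fin.val hij
  rcases lt_trichotomy (i : ℕ) a with hi | hi | hi <;>
    rcases lt_trichotomy (j : ℕ) a with hj | hj | hj
  · rw [glueFun_val_of_lt h τ ρ hi, glueFun_val_of_lt h τ ρ hj] at key
    have h2 := congrArg Fin.val (τ.injective (Fin.ext key))
    simp only [Fin.val_mk] at h2
    omega
  · rw [glueFun_val_of_lt h τ ρ hi, glueFun_val_of_eq h τ ρ hj] at key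
    have := (τ ⟨(i : ℕ), hi⟩).isLt; omega
  · rw [glueFun_val_of_lt h τ ρ hi, glueFun_val_of_gt h τ ρ hj] at key
    have := (τ ⟨(i : ℕ), hi⟩).isLt; omega
  · rw [glueFun_val_of_eq h τ ρ hi, glueFun_val_of_lt h τ ρ hj] at key
    have := (τ ⟨(j : ℕ), hj⟩).isLt; omega
  · omega
  · rw [glueFun_val_of_eq h τ ρ hi, glueFun_val_of_gt h τ ρ hj] at key
    have := (ρ ⟨(j : ℕ) - (a + 1), by have := j.isLt; omega⟩).isLt; omega
  · rw [glueFun_val_of_gt h τ ρ hi, glueFun_val_of_lt h τ ρ hj] at key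
    have := (τ ⟨(j : ℕ), hj⟩).isLt; omega
  · rw [glueFun_val_of_gt h τ ρ hi, glueFun_val_of_eq h τ ρ hj] at key
    have := (ρ ⟨(i : ℕ) - (a + 1), by have := i.isLt; omega⟩).isLt; omega
  · rw [glueFun_val_of_gt h τ ρ hi, glueFun_val_of_gt h τ ρ hj] at key
    have h2 := congrArg Fin.val (ρ.injective (Fin.ext (by omega :
      ((ρ ⟨(i : ℕ) - (a + 1), by have := i.isLt; omega⟩ : Fin b) : ℕ)
        = (ρ ⟨(j : ℕ) - (a + 1), by have := j.isLt; omega⟩ : Fin b))))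
    simp only [Fin.val_mk] at h2
    omega

noncomputable def glue (h : n = a + 1 + b) (τ : Perm (Fin a)) (ρ : Perm (Fin b)) :
    Perm (Fin n) :=
  Equiv.ofBijective _ (Finite.injective_iff_bijective.mp (glueFun_injective h τ ρ))

lemma glue_val_of_lt (h : n = a + 1 + b) (τ : Perm (Fin a)) (ρ : Perm (Fin b)) {i : Fin n}
    (hi : (i : ℕ) < a) : (glue h τ ρ i : ℕ) = τ ⟨i, hi⟩ :=
  glueFun_val_of_lt h τ ρ hi

lemma glue_val_of_eq (h : n = a + 1 + b) (τ : Perm (Fin a)) (ρ : Perm (Fin b)) {i : Fin n}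
    (hi : (i : ℕ) = a) : (glue h τ ρ i : ℕ) = a + b :=
  glueFun_val_of_eq h τ ρ hi

lemma glue_val_of_gt (h : n = a + 1 + b) (τ : Perm (Fin a)) (ρ : Perm (Fin b)) {i : Fin n}
    (hi : a < (i : ℕ)) :
    (glue h τ ρ i : ℕ) = a + ρ ⟨(i : ℕ) - (a + 1), by have := i.isLt; omega⟩ :=
  glueFun_val_of_gt h τ ρ hi

lemma glue_val_pre (h : n = a + 1 + b) (τ : Perm (Fin a)) (ρ : Perm (Fin b)) (i : Fin a) :
    (glue h τ ρ ⟨(i : ℕ), by omega⟩ : ℕ) = τ i := by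
  rw [glue_val_of_lt h τ ρ (by simpa using i.isLt)]

lemma glue_val_suf (h : n = a + 1 + b) (τ : Perm (Fin a)) (ρ : Perm (Fin b)) (i : Fin b) :
    (glue h τ ρ ⟨a + 1 + (i : ℕ), by have := i.isLt; omega⟩ : ℕ) = a + ρ i := by
  rw [glue_val_of_gt h τ ρ (by simp only [Fin.val_mk]; omega)]
  congr 2
  exact Fin.ext (by simp)

lemma glue_val_le (h : n = a + 1 + b) (τ : Perm (Fin a)) (ρ : Perm (Fin b)) (i : Fin n) :
    (glue h τ ρ i : ℕ) ≤ a + b := by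
  have := (glue h τ ρ i).isLt; omega



lemma avoids_glue (h : n = a + 1 + b) (τ : Perm (Fin a)) (ρ : Perm (Fin b))
    (hτ : Avoids231 τ) (hρ : Avoids231 ρ) : Avoids231 (glue h τ ρ) := by
  rintro ⟨i₁, i₂, i₃, h12, h23, h31, h1t⟩
  rw [Fin.lt_def] at h12 h23 h31 h1t
  rcases lt_trichotomy (i₁ : ℕ) a with hi1 | hi1 | hi1
  · have v1 := glue_val_of_lt h τ ρ hi1
    rcases lt_trichotomy (i₃ : ℕ) a with hi3 | hi3 | hi3
    · have hi2 : (i₂ : ℕ) < a := by omega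
      have v2 := glue_val_of_lt h τ ρ hi2
      have v3 := glue_val_of_lt h τ ρ hi3
      refine hτ ⟨⟨i₁, hi1⟩, ⟨i₂, hi2⟩, ⟨i₃, hi3⟩, ?_, ?_, ?_, ?_⟩ <;>
        · simp only [Fin.lt_def, Fin.val_mk]; omega
    · have v3 := glue_val_of_eq h τ ρ hi3
      have := (τ ⟨(i₁ : ℕ), hi1⟩).isLt
      omega
    · have v3 := glue_val_of_gt h τ ρ hi3
      have := (τ ⟨(i₁ : ℕ), hi1⟩).isLt
      omega
  · have v1 := glue_val_of_eq h τ ρ hi1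
    have := glue_val_le h τ ρ i₂
    omega
  · have hi2 : a < (i₂ : ℕ) := by omega
    have hi3 : a < (i₃ : ℕ) := by omega
    have v1 := glue_val_of_gt h τ ρ hi1
    have v2 := glue_val_of_gt h τ ρ hi2
    have v3 := glue_val_of_gt h τ ρ hi3
    refine hρ ⟨⟨(i₁ : ℕ) - (a + 1), by have := i₁.isLt; omega⟩,
      ⟨(i₂ : ℕ) - (a + 1), by have := i₂.isLt; omega⟩,
      ⟨(i₃ : ℕ) - (a + 1), by have := i₃.isLt; omega⟩, ?_, ?_, ?_, ?_⟩ <;>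
      · simp only [Fin.lt_def, Fin.val_mk]; omega

lemma avoids_of_glue_left (h : n = a + 1 + b) (τ : Perm (Fin a)) (ρ : Perm (Fin b))
    (hg : Avoids231 (glue h τ ρ)) : Avoids231 τ := by
  rintro ⟨i₁, i₂, i₃, h12, h23, h31, h1t⟩
  rw [Fin.lt_def] at h12 h23 h31 h1t
  have v1 := glue_val_pre h τ ρ i₁
  have v2 := glue_val_pre h τ ρ i₂
  have v3 := glue_val_pre h τ ρ i₃
  refine hg ⟨⟨(i₁ : ℕ), by omega⟩, ⟨(i₂ : ℕ), by omega⟩, ⟨(i₃ : ℕ), by omega⟩,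
    ?_, ?_, ?_, ?_⟩ <;>
    · simp only [Fin.lt_def, Fin.val_mk]; omega

lemma avoids_of_glue_right (h : n = a + 1 + b) (τ : Perm (Fin a)) (ρ : Perm (Fin b))
    (hg : Avoids231 (glue h τ ρ)) : Avoids231 ρ := by
  rintro ⟨i₁, i₂, i₃, h12, h23, h31, h1t⟩
  rw [Fin.lt_def] at h12 h23 h31 h1t
  have v1 := glue_val_suf h τ ρ i₁
  have v2 := glue_val_suf h τ ρ i₂
  have v3 := glue_val_suf h τ ρ i₃
  refine hg ⟨⟨a + 1 + (i₁ : ℕ), by have := i₁.isLt; omega⟩,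
    ⟨a + 1 + (i₂ : ℕ), by have := i₂.isLt; omega⟩,
    ⟨a + 1 + (i₃ : ℕ), by have := i₃.isLt; omega⟩, ?_, ?_, ?_, ?_⟩ <;>
    · simp only [Fin.lt_def, Fin.val_mk]; omega

lemma glue_inj_parts (h : n = a + 1 + b) {τ τ' : Perm (Fin a)} {ρ ρ' : Perm (Fin b)}
    (he : glue h τ ρ = glue h τ' ρ') : τ = τ' ∧ ρ = ρ' := by
  constructor
  · refine Equiv.ext fun i => Fin.ext ?_
    have e1 := glue_val_pre h τ ρ i
    have e2 := glue_val_pre h τ' ρ' i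
    rw [he] at e1
    omega
  · refine Equiv.ext fun i => Fin.ext ?_
    have e1 := glue_val_suf h τ ρ i
    have e2 := glue_val_suf h τ' ρ' i
    rw [he] at e1
    omega

lemma val_lt_top (σ : Perm (Fin n)) (h : n = a + 1 + b)
    (hp : (σ ⟨a, by omega⟩ : ℕ) = a + b) {i : Fin n} (hi : (i : ℕ) ≠ a) :
    (σ i : ℕ) < a + b := by
  have h1 : σ i ≠ σ ⟨a, by omega⟩ :=
    fun e => hi (by simpa using congrArg Fin.val (σ.injective e))
  have h2 := (σ i).isLt
  have h3 : (σ i : ℕ) ≠ a + b := fun e => h1 (Fin.ext (by omega))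
  omega

lemma prefix_lt (σ : Perm (Fin n)) (hσ : Avoids231 σ) (h : n = a + 1 + b)
    (hp : (σ ⟨a, by omega⟩ : ℕ) = a + b) {i : Fin n} (hi : (i : ℕ) < a) :
    (σ i : ℕ) < a := by
  have htop : (σ i : ℕ) < a + b := val_lt_top σ h hp (by omega)
  have hlt : ∀ k : Fin n, a < (k : ℕ) → (σ i : ℕ) < (σ k : ℕ) := by
    intro k hk
    by_contra hle
    push_neg at hle
    have hne : (σ k : ℕ) ≠ (σ i : ℕ) := by
      intro e
      have := congrArg Fin.val (σ.injective (Fin.ext e))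
      omega
    refine hσ ⟨i, ⟨a, by omega⟩, k, ?_, ?_, ?_, ?_⟩ <;>
      · simp only [Fin.lt_def, Fin.val_mk]; omega
  have hcard : (Finset.Ici (⟨a, by omega⟩ : Fin n)).card ≤ (Finset.Ioi (σ i)).card := by
    apply Finset.card_le_card_of_injOn σ
    · intro k hk
      simp only [Finset.mem_coe, Finset.mem_Ici] at hk
      simp only [Finset.mem_coe, Finset.mem_Ioi, Fin.lt_def]
      rcases eq_or_lt_of_le hk with he | hlt2
      · rw [← he, hp]; omega
      · exact hlt k (by simpa [Fin.lt_def] using hlt2)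
    · exact fun x _ y _ e => σ.injective e
  rw [Fin.card_Ici, Fin.card_Ioi] at hcard
  have := (σ i).isLt
  simp only [Fin.val_mk] at hcard
  omega

lemma suffix_ge (σ : Perm (Fin n)) (hσ : Avoids231 σ) (h : n = a + 1 + b)
    (hp : (σ ⟨a, by omega⟩ : ℕ) = a + b) {i : Fin n} (hi : a < (i : ℕ)) :
    a ≤ (σ i : ℕ) := by
  classical
  by_contra hlt
  push_neg at hlt
  set A : Finset (Fin n) := Finset.univ.filter (fun x => (x : ℕ) < a) with hA
  have himg : A.image σ ⊆ A := by
    intro v hv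
    simp only [hA, Finset.mem_image, Finset.mem_filter, Finset.mem_univ, true_and] at hv ⊢
    obtain ⟨x, hx, he⟩ := hv
    rw [← he]
    exact prefix_lt σ hσ h hp hx
  have hcard : A.card ≤ (A.image σ).card := by
    rw [Finset.card_image_of_injective _ σ.injective]
  have heq : A.image σ = A := Finset.eq_of_subset_of_card_le himg hcard
  have hmem : σ i ∈ A.image σ := by
    rw [heq]
    simp only [hA, Finset.mem_filter, Finset.mem_univ, true_and]
    exact hlt
  obtain ⟨x, hx, he⟩ := Finset.mem_image.mp hmem
  have hxi := σ.injective he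
  simp only [hA, Finset.mem_filter, Finset.mem_univ, true_and] at hx
  omega

lemma glue_surj (σ : Perm (Fin n)) (hσ : Avoids231 σ) (h : n = a + 1 + b)
    (hp : (σ ⟨a, by omega⟩ : ℕ) = a + b) :
    ∃ (τ : Perm (Fin a)) (ρ : Perm (Fin b)), glue h τ ρ = σ := by
  classical
  have hpre : ∀ i : Fin a, ((σ ⟨(i : ℕ), by omega⟩ : Fin n) : ℕ) < a := fun i =>
    prefix_lt σ hσ h hp (by simpa using i.isLt)
  have hsufb : ∀ i : Fin b,
      a ≤ ((σ ⟨a + 1 + (i : ℕ), by have := i.isLt; omega⟩ : Fin n) : ℕ) := fun i =>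
    suffix_ge σ hσ h hp (by simp only [Fin.val_mk]; omega)
  have hsuft : ∀ i : Fin b,
      ((σ ⟨a + 1 + (i : ℕ), by have := i.isLt; omega⟩ : Fin n) : ℕ) < a + b := fun i =>
    val_lt_top σ h hp (by simp only [Fin.val_mk]; omega)
  have finj : Function.Injective
      (fun i : Fin a => (⟨(σ ⟨(i : ℕ), by omega⟩ : Fin n), hpre i⟩ : Fin a)) := by
    intro x y e
    have e2 := congrArg Fin.val e
    simp only [Fin.val_mk] at e2
    have := congrArg Fin.val (σ.injective (Fin.ext e2))
    simp only [Fin.val_mk] at this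
    exact Fin.ext this
  have ginj : Function.Injective
      (fun i : Fin b => (⟨((σ ⟨a + 1 + (i : ℕ), by have := i.isLt; omega⟩ : Fin n) : ℕ) - a,
        by have h1 := hsuft i; have h2 := hsufb i; omega⟩ : Fin b)) := by
    intro x y e
    have e2 := congrArg Fin.val e
    simp only [Fin.val_mk] at e2
    have e3 : ((σ ⟨a + 1 + (x : ℕ), by have := x.isLt; omega⟩ : Fin n) : ℕ)
        = ((σ ⟨a + 1 + (y : ℕ), by have := y.isLt; omega⟩ : Fin n) : ℕ) := by
      have := hsufb x; have := hsufb y; omega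
    have := congrArg Fin.val (σ.injective (Fin.ext e3))
    simp only [Fin.val_mk] at this
    exact Fin.ext (by omega)
  obtain ⟨τ, hτfun⟩ : ∃ τ : Perm (Fin a), ∀ (i : Fin a) (j : Fin n),
      (j : ℕ) = (i : ℕ) → (τ i : ℕ) = σ j := by
    refine ⟨Equiv.ofBijective _ (Finite.injective_iff_bijective.mp finj), fun i j hj => ?_⟩
    simp only [Equiv.ofBijective_apply, Fin.val_mk]
    exact congrArg (fun t => ((σ t : Fin n) : ℕ)) (Fin.ext (by simp [hj]))
  obtain ⟨ρ, hρfun⟩ : ∃ ρ : Perm (Fin b), ∀ (i : Fin b) (j : Fin n),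
      (j : ℕ) = a + 1 + (i : ℕ) → (ρ i : ℕ) = (σ j : ℕ) - a := by
    refine ⟨Equiv.ofBijective _ (Finite.injective_iff_bijective.mp ginj), fun i j hj => ?_⟩
    simp only [Equiv.ofBijective_apply, Fin.val_mk]
    exact congrArg (fun t => ((σ t : Fin n) : ℕ) - a) (Fin.ext (by simp [hj]))
  refine ⟨τ, ρ, Equiv.ext fun i => Fin.ext ?_⟩
  rcases lt_trichotomy (i : ℕ) a with hi | hi | hi
  · have e1 := glue_val_of_lt h τ ρ hi
    have e2 := hτfun ⟨(i : ℕ), hi⟩ i (by simp)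
    omega
  · have e1 := glue_val_of_eq h τ ρ hi
    have e2 : (σ i : ℕ) = a + b := by
      rw [show i = ⟨a, by omega⟩ from Fin.ext hi]
      exact hp
    omega
  · have e1 := glue_val_of_gt h τ ρ hi
    have e2 := hρfun ⟨(i : ℕ) - (a + 1), by have := i.isLt; omega⟩ i
      (by simp only [Fin.val_mk]; omega)
    have e3 := suffix_ge σ hσ h hp hi
    omega



lemma lis_glue_ge (h : n = a + 1 + b) (τ : Perm (Fin a)) (ρ : Perm (Fin b)) (hb : b ≠ 0) :
    lisLen τ + lisLen ρ ≤ lisLen (glue h τ ρ) := by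
  obtain ⟨fτ, hfτ, hgτ⟩ := lisLen_mem τ
  obtain ⟨fρ, hfρ, hgρ⟩ := lisLen_mem ρ
  refine le_lisLen _ ⟨fun j => if hj : (j : ℕ) < lisLen τ
      then ⟨(fτ ⟨j, hj⟩ : ℕ), by have := (fτ ⟨j, hj⟩).isLt; omega⟩
      else ⟨a + 1 + (fρ ⟨(j : ℕ) - lisLen τ, by have := j.isLt; omega⟩ : ℕ),
        by have := (fρ ⟨(j : ℕ) - lisLen τ, by have := j.isLt; omega⟩).isLt; omega⟩,
    ?_, ?_⟩
  · intro x y hxy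
    rw [Fin.lt_def] at hxy
    by_cases hx : (x : ℕ) < lisLen τ <;> by_cases hy : (y : ℕ) < lisLen τ <;>
      simp only [hx, hy, dite_true, dite_false, dif_pos, dif_neg, Fin.lt_def, Fin.val_mk]
    · have := hfτ (show (⟨(x : ℕ), hx⟩ : Fin (lisLen τ)) < ⟨(y : ℕ), hy⟩ from
        Fin.mk_lt_mk.mpr hxy)
      rw [Fin.lt_def] at this
      omega
    · have := (fτ ⟨(x : ℕ), hx⟩).isLt; omega
    · omega
    · have := hfρ (show (⟨(x : ℕ) - lisLen τ, by have := x.isLt; omega⟩ : Fin (lisLen ρ)) <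
        ⟨(y : ℕ) - lisLen τ, by have := y.isLt; omega⟩ from Fin.mk_lt_mk.mpr (by omega))
      rw [Fin.lt_def] at this
      omega
  · intro x y hxy
    rw [Fin.lt_def] at hxy
    simp only [Function.comp_apply, Fin.lt_def]
    by_cases hx : (x : ℕ) < lisLen τ <;> by_cases hy : (y : ℕ) < lisLen τ <;>
      simp only [hx, hy, dite_true, dite_false, dif_pos, dif_neg]
    · have e1 := glue_val_pre h τ ρ (fτ ⟨(x : ℕ), hx⟩)
      have e2 := glue_val_pre h τ ρ (fτ ⟨(y : ℕ), hy⟩)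
      have e3 := hgτ (show (⟨(x : ℕ), hx⟩ : Fin (lisLen τ)) < ⟨(y : ℕ), hy⟩ from
        Fin.mk_lt_mk.mpr hxy)
      rw [Fin.lt_def] at e3
      simp only [Function.comp_apply] at e3
      omega
    · have e1 := glue_val_pre h τ ρ (fτ ⟨(x : ℕ), hx⟩)
      have e2 := glue_val_suf h τ ρ (fρ ⟨(y : ℕ) - lisLen τ, by have := y.isLt; omega⟩)
      have := (τ (fτ ⟨(x : ℕ), hx⟩)).isLt
      omega
    · omega
    · have e1 := glue_val_suf h τ ρ (fρ ⟨(x : ℕ) - lisLen τ, by have := x.isLt; omega⟩)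
      have e2 := glue_val_suf h τ ρ (fρ ⟨(y : ℕ) - lisLen τ, by have := y.isLt; omega⟩)
      have e3 := hgρ (show (⟨(x : ℕ) - lisLen τ, by have := x.isLt; omega⟩ : Fin (lisLen ρ)) <
        ⟨(y : ℕ) - lisLen τ, by have := y.isLt; omega⟩ from Fin.mk_lt_mk.mpr (by omega))
      rw [Fin.lt_def] at e3
      simp only [Function.comp_apply] at e3
      omega

lemma lis_glue_ge0 (h : n = a + 1 + b) (τ : Perm (Fin a)) (ρ : Perm (Fin b)) :
    lisLen τ + 1 ≤ lisLen (glue h τ ρ) := by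
  obtain ⟨fτ, hfτ, hgτ⟩ := lisLen_mem τ
  refine le_lisLen _ ⟨fun j => if hj : (j : ℕ) < lisLen τ
      then ⟨(fτ ⟨j, hj⟩ : ℕ), by have := (fτ ⟨j, hj⟩).isLt; omega⟩
      else ⟨a, by omega⟩, ?_, ?_⟩
  · intro x y hxy
    rw [Fin.lt_def] at hxy
    by_cases hx : (x : ℕ) < lisLen τ <;> by_cases hy : (y : ℕ) < lisLen τ <;>
      simp only [hx, hy, dite_true, dite_false, dif_pos, dif_neg, Fin.lt_def, Fin.val_mk]
    · have := hfτ (show (⟨(x : ℕ), hx⟩ : Fin (lisLen τ)) < ⟨(y : ℕ), hy⟩ from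
        Fin.mk_lt_mk.mpr hxy)
      rw [Fin.lt_def] at this
      omega
    · have := (fτ ⟨(x : ℕ), hx⟩).isLt; omega
    · have hky := y.isLt; omega
    · have hkx := x.isLt; have hky := y.isLt; omega
  · intro x y hxy
    rw [Fin.lt_def] at hxy
    simp only [Function.comp_apply, Fin.lt_def]
    by_cases hx : (x : ℕ) < lisLen τ <;> by_cases hy : (y : ℕ) < lisLen τ <;>
      simp only [hx, hy, dite_true, dite_false, dif_pos, dif_neg]
    · have e1 := glue_val_pre h τ ρ (fτ ⟨(x : ℕ), hx⟩)
      have e2 := glue_val_pre h τ ρ (fτ ⟨(y : ℕ), hy⟩)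
      have e3 := hgτ (show (⟨(x : ℕ), hx⟩ : Fin (lisLen τ)) < ⟨(y : ℕ), hy⟩ from
        Fin.mk_lt_mk.mpr hxy)
      rw [Fin.lt_def] at e3
      simp only [Function.comp_apply] at e3
      omega
    · have e1 := glue_val_pre h τ ρ (fτ ⟨(x : ℕ), hx⟩)
      have e2 := glue_val_of_eq h τ ρ (i := ⟨a, by omega⟩) (by simp)
      have := (τ (fτ ⟨(x : ℕ), hx⟩)).isLt
      omega
    · have hky := y.isLt; omega
    · have hkx := x.isLt; have hky := y.isLt; omega

open scoped Classical in
lemma lis_glue_le (h : n = a + 1 + b) (τ : Perm (Fin a)) (ρ : Perm (Fin b)) :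
    lisLen (glue h τ ρ) ≤ lisLen τ + max (lisLen ρ) 1 := by
  refine lisLen_le _ fun k hk => ?_
  obtain ⟨f, hf, hgf⟩ := hk
  set k1 := (Finset.univ.filter fun j : Fin k => ((f j : Fin n) : ℕ) < a).card with hk1def
  have hk1k : k1 ≤ k := by
    refine le_trans (Finset.card_filter_le _ _) ?_
    simp
  have claim1 : ∀ j : Fin k, (j : ℕ) < k1 ↔ ((f j : Fin n) : ℕ) < a := by
    intro j
    constructor
    · intro hj
      by_contra hc
      push_neg at hc
      have hsub : (Finset.univ.filter fun x : Fin k => ((f x : Fin n) : ℕ) < a)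
          ⊆ Finset.Iio j := by
        intro x hx
        simp only [Finset.mem_filter, Finset.mem_univ, true_and] at hx
        have hfx : f x < f j := by rw [Fin.lt_def]; omega
        have := hf.lt_iff_lt.mp hfx
        simpa [Finset.mem_Iio] using this
      have := Finset.card_le_card hsub
      rw [Fin.card_Iio] at this
      omega
    · intro hj
      have hsub : Finset.Iic j ⊆ (Finset.univ.filter fun x : Fin k => ((f x : Fin n) : ℕ) < a) := by
        intro x hx
        simp only [Finset.mem_Iic] at hx
        simp only [Finset.mem_filter, Finset.mem_univ, true_and]
        have : f x ≤ f j := hf.monotone hx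
        rw [Fin.le_def] at this
        omega
      have := Finset.card_le_card hsub
      rw [Fin.card_Iic] at this
      omega
  have claim2 : k1 ≤ lisLen τ := by
    refine le_lisLen τ ⟨fun j => ⟨((f ⟨(j : ℕ), by omega⟩ : Fin n) : ℕ),
      (claim1 ⟨(j : ℕ), by omega⟩).mp (by simpa using j.isLt)⟩, ?_, ?_⟩
    · intro x y hxy
      rw [Fin.lt_def] at hxy
      simp only [Fin.lt_def, Fin.val_mk]
      have := hf (show (⟨(x : ℕ), by omega⟩ : Fin k) < ⟨(y : ℕ), by omega⟩ from
        Fin.mk_lt_mk.mpr hxy)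
      rw [Fin.lt_def] at this
      omega
    · intro x y hxy
      rw [Fin.lt_def] at hxy
      simp only [Function.comp_apply, Fin.lt_def]
      have hx' : ((f ⟨(x : ℕ), by omega⟩ : Fin n) : ℕ) < a :=
        (claim1 _).mp (by simpa using x.isLt)
      have hy' : ((f ⟨(y : ℕ), by omega⟩ : Fin n) : ℕ) < a :=
        (claim1 _).mp (by simpa using y.isLt)
      have e1 := glue_val_of_lt h τ ρ hx'
      have e2 := glue_val_of_lt h τ ρ hy'
      have e3 := hgf (show (⟨(x : ℕ), by omega⟩ : Fin k) < ⟨(y : ℕ), by omega⟩ from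
        Fin.mk_lt_mk.mpr hxy)
      rw [Fin.lt_def] at e3
      simp only [Function.comp_apply] at e3
      omega
  by_cases hpiv : ∃ j0 : Fin k, ((f j0 : Fin n) : ℕ) = a
  · obtain ⟨j0, hj0⟩ := hpiv
    have hmax : ∀ j : Fin k, (j : ℕ) ≤ (j0 : ℕ) := by
      intro j
      by_contra hc
      push_neg at hc
      have e0 := glue_val_of_eq h τ ρ hj0
      have e1 := glue_val_le h τ ρ (f j)
      have := hgf (show j0 < j from Fin.lt_def.mpr hc)
      rw [Fin.lt_def] at this
      simp only [Function.comp_apply] at this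
      omega
    have hj0k1 : (j0 : ℕ) ≤ k1 := by
      rcases Nat.eq_zero_or_pos (j0 : ℕ) with h0 | h0
      · omega
      · have hlt : (⟨(j0 : ℕ) - 1, by have := j0.isLt; omega⟩ : Fin k) < j0 :=
          Fin.lt_def.mpr (by simp only [Fin.val_mk]; omega)
        have := hf hlt
        rw [Fin.lt_def] at this
        have := (claim1 ⟨(j0 : ℕ) - 1, by have := j0.isLt; omega⟩).mpr (by omega)
        simp only [Fin.val_mk] at this
        omega
    have hk2 : k ≤ k1 + 1 := by
      rcases Nat.eq_zero_or_pos k with h0 | h0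
      · omega
      · have := hmax ⟨k - 1, by omega⟩
        simp only [Fin.val_mk] at this
        omega
    have h1 : 1 ≤ max (lisLen ρ) 1 := le_max_right _ _
    omega
  · push_neg at hpiv
    have hsgt : ∀ j : Fin k, ¬ ((j : ℕ) < k1) → a < ((f j : Fin n) : ℕ) := by
      intro j hj
      have h1 : ¬ ((f j : Fin n) : ℕ) < a := fun hc => hj ((claim1 j).mpr hc)
      have h2 := hpiv j
      omega
    have claim3 : k - k1 ≤ lisLen ρ := by
      refine le_lisLen ρ ⟨fun j =>
        ⟨((f ⟨k1 + (j : ℕ), by have := j.isLt; omega⟩ : Fin n) : ℕ) - (a + 1), by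
          have hgt := hsgt ⟨k1 + (j : ℕ), by have := j.isLt; omega⟩
            (by simp only [Fin.val_mk]; omega)
          have := (f ⟨k1 + (j : ℕ), by have := j.isLt; omega⟩).isLt
          omega⟩, ?_, ?_⟩
      · intro x y hxy
        rw [Fin.lt_def] at hxy
        simp only [Fin.lt_def, Fin.val_mk]
        have := hf (show (⟨k1 + (x : ℕ), by have := x.isLt; omega⟩ : Fin k) <
          ⟨k1 + (y : ℕ), by have := y.isLt; omega⟩ from Fin.mk_lt_mk.mpr (by omega))
        rw [Fin.lt_def] at this
        have hgx := hsgt ⟨k1 + (x : ℕ), by have := x.isLt; omega⟩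
          (by simp only [Fin.val_mk]; omega)
        omega
      · intro x y hxy
        rw [Fin.lt_def] at hxy
        simp only [Function.comp_apply, Fin.lt_def]
        have hgx := hsgt ⟨k1 + (x : ℕ), by have := x.isLt; omega⟩
          (by simp only [Fin.val_mk]; omega)
        have hgy := hsgt ⟨k1 + (y : ℕ), by have := y.isLt; omega⟩
          (by simp only [Fin.val_mk]; omega)
        have e1 := glue_val_of_gt h τ ρ hgx
        have e2 := glue_val_of_gt h τ ρ hgy
        have e3 := hgf (show (⟨k1 + (x : ℕ), by have := x.isLt; omega⟩ : Fin k) <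
          ⟨k1 + (y : ℕ), by have := y.isLt; omega⟩ from Fin.mk_lt_mk.mpr (by omega))
        rw [Fin.lt_def] at e3
        simp only [Function.comp_apply] at e3
        omega
    have h1 : lisLen ρ ≤ max (lisLen ρ) 1 := le_max_left _ _
    omega

lemma lis_glue_pos (h : n = a + 1 + b) (τ : Perm (Fin a)) (ρ : Perm (Fin b)) (hb : b ≠ 0) :
    lisLen (glue h τ ρ) = lisLen τ + lisLen ρ := by
  have h1 := lis_glue_ge h τ ρ hb
  have h2 := lis_glue_le h τ ρ
  have h3 := one_le_lisLen ρ hb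
  have h4 : max (lisLen ρ) 1 = lisLen ρ := max_eq_left h3
  omega

lemma lis_glue_zero (h : n = a + 1 + b) (τ : Perm (Fin a)) (ρ : Perm (Fin b)) (hb : b = 0) :
    lisLen (glue h τ ρ) = lisLen τ + 1 := by
  subst hb
  have h1 := lis_glue_ge0 h τ ρ
  have h2 := lis_glue_le h τ ρ
  have h3 := lisLen_zero ρ
  have h4 : max (lisLen ρ) 1 = 1 := max_eq_right (by omega)
  omega



lemma catalan_ne_zero (m : ℕ) : (catalan m : ℝ) ≠ 0 := by
  have h1 := succ_mul_catalan_eq_centralBinom m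
  have h2 := Nat.centralBinom_pos m
  have h3 : catalan m ≠ 0 := by
    intro h
    rw [h, mul_zero] at h1
    omega
  exact_mod_cast h3

open scoped Classical in
noncomputable def sumE (lam : ℝ) (m : ℕ) : ℝ :=
  ∑ σ ∈ Finset.univ.filter (fun σ : Perm (Fin m) => Avoids231 σ), Real.exp (lam * lisLen σ)

lemma catalan_mul_minc (lam : ℝ) (m : ℕ) :
    (catalan m : ℝ) * Minc m lam = sumE lam m := by
  rw [Minc, sumE, mul_comm, div_mul_cancel₀ _ (catalan_ne_zero m)]

open scoped Classical in
lemma fiber_sum (lam : ℝ) (h : n = a + 1 + b) :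
    ∑ σ ∈ Finset.univ.filter (fun σ : Perm (Fin n) =>
        Avoids231 σ ∧ (σ ⟨a, by omega⟩ : ℕ) = a + b), Real.exp (lam * lisLen σ)
    = if b = 0 then Real.exp lam * sumE lam a else sumE lam a * sumE lam b := by
  have key : ∑ σ ∈ Finset.univ.filter (fun σ : Perm (Fin n) =>
        Avoids231 σ ∧ (σ ⟨a, by omega⟩ : ℕ) = a + b), Real.exp (lam * lisLen σ)
      = ∑ p ∈ (Finset.univ.filter (fun τ : Perm (Fin a) => Avoids231 τ)) ×ˢ
          (Finset.univ.filter (fun ρ : Perm (Fin b) => Avoids231 ρ)),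
          Real.exp (lam * lisLen (glue h p.1 p.2)) := by
    refine (Finset.sum_bij (fun p _ => glue h p.1 p.2) ?_ ?_ ?_ ?_).symm
    · intro p hp
      simp only [Finset.mem_product, Finset.mem_filter, Finset.mem_univ, true_and] at hp
      simp only [Finset.mem_filter, Finset.mem_univ, true_and]
      exact ⟨avoids_glue h _ _ hp.1 hp.2, glue_val_of_eq h _ _ (by simp)⟩
    · intro p1 h1 p2 h2 he
      obtain ⟨e1, e2⟩ := glue_inj_parts h he
      exact Prod.ext e1 e2
    · intro σ hσ
      simp only [Finset.mem_filter, Finset.mem_univ, true_and] at hσ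
      obtain ⟨τ, ρ, he⟩ := glue_surj σ hσ.1 h hσ.2
      have hg : Avoids231 (glue h τ ρ) := by rw [he]; exact hσ.1
      refine ⟨(τ, ρ), ?_, he⟩
      simp only [Finset.mem_product, Finset.mem_filter, Finset.mem_univ, true_and]
      exact ⟨avoids_of_glue_left h τ ρ hg, avoids_of_glue_right h τ ρ hg⟩
    · intro p hp; rfl
  rw [key]
  rcases eq_or_ne b 0 with hb | hb
  · subst hb
    rw [if_pos rfl, Finset.sum_product]
    rw [sumE, Finset.mul_sum]
    refine Finset.sum_congr rfl fun τ _ => ?_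
    have hcongr : ∀ ρ ∈ Finset.univ.filter (fun ρ : Perm (Fin 0) => Avoids231 ρ),
        Real.exp (lam * lisLen (glue h τ ρ)) = Real.exp lam * Real.exp (lam * lisLen τ) := by
      intro ρ _
      rw [lis_glue_zero h τ ρ rfl]
      push_cast
      rw [mul_add, mul_one, Real.exp_add, mul_comm]
    rw [Finset.sum_congr rfl hcongr, Finset.sum_const]
    have hful : (Finset.univ.filter (fun ρ : Perm (Fin 0) => Avoids231 ρ)) = Finset.univ := by
      refine Finset.filter_true_of_mem fun ρ _ => ?_
      rintro ⟨i, -⟩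
      exact i.elim0
    rw [hful]
    simp [Finset.card_univ]
  · rw [if_neg hb, sumE, sumE, Finset.sum_mul_sum, Finset.sum_product]
    refine Finset.sum_congr rfl fun τ _ => Finset.sum_congr rfl fun ρ _ => ?_
    rw [lis_glue_pos h τ ρ hb]
    push_cast
    rw [mul_add, Real.exp_add]

open scoped Classical in
lemma sumE_rec (lam : ℝ) (m : ℕ) :
    sumE lam (m + 1) = (∑ i ∈ Finset.range m, sumE lam i * sumE lam (m - i))
      + Real.exp lam * sumE lam m := by
  have hfib := Finset.sum_fiberwise (κ := Fin (m + 1))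
    (Finset.univ.filter (fun σ : Perm (Fin (m + 1)) => Avoids231 σ))
    (fun σ => σ.symm ⟨m, by omega⟩) (fun σ => Real.exp (lam * lisLen σ))
  have hL : sumE lam (m + 1) = ∑ σ ∈ Finset.univ.filter
      (fun σ : Perm (Fin (m + 1)) => Avoids231 σ), Real.exp (lam * lisLen σ) := rfl
  rw [hL, ← hfib]
  have hfil : ∀ p : Fin (m + 1),
      (Finset.univ.filter (fun σ : Perm (Fin (m + 1)) => Avoids231 σ)).filter
        (fun σ => σ.symm ⟨m, by omega⟩ = p)
      = Finset.univ.filter (fun σ : Perm (Fin (m + 1)) =>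
          Avoids231 σ ∧ (σ p : ℕ) = (p : ℕ) + (m - (p : ℕ))) := by
    intro p
    rw [Finset.filter_filter]
    refine Finset.filter_congr fun σ _ => ?_
    have hp := p.isLt
    constructor
    · rintro ⟨h1, h2⟩
      refine ⟨h1, ?_⟩
      rw [← h2, Equiv.apply_symm_apply]
      simp only [Fin.val_mk]
      omega
    · rintro ⟨h1, h2⟩
      refine ⟨h1, ?_⟩
      have hσp : σ p = ⟨m, by omega⟩ := Fin.ext (by simp only [Fin.val_mk]; omega)
      rw [← hσp, Equiv.symm_apply_apply]
  have hstep : ∀ p : Fin (m + 1),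
      ∑ σ ∈ Finset.univ.filter (fun σ : Perm (Fin (m + 1)) =>
          Avoids231 σ ∧ (σ p : ℕ) = (p : ℕ) + (m - (p : ℕ))), Real.exp (lam * lisLen σ)
      = if m - (p : ℕ) = 0 then Real.exp lam * sumE lam (p : ℕ)
        else sumE lam (p : ℕ) * sumE lam (m - (p : ℕ)) := by
    intro p
    have hp := p.isLt
    have h : m + 1 = (p : ℕ) + 1 + (m - (p : ℕ)) := by omega
    exact fiber_sum lam h
  have c1 : ∑ p : Fin (m + 1), ∑ σ ∈ (Finset.univ.filter
          (fun σ : Perm (Fin (m + 1)) => Avoids231 σ)).filter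
          (fun σ => σ.symm ⟨m, by omega⟩ = p), Real.exp (lam * lisLen σ)
      = ∑ p : Fin (m + 1), (if m - (p : ℕ) = 0 then Real.exp lam * sumE lam (p : ℕ)
          else sumE lam (p : ℕ) * sumE lam (m - (p : ℕ))) :=
    Finset.sum_congr rfl fun p _ => by rw [hfil p]; exact hstep p
  rw [c1, Fin.sum_univ_eq_sum_range (fun i => if m - i = 0 then Real.exp lam * sumE lam i
      else sumE lam i * sumE lam (m - i)), Finset.sum_range_succ]
  rw [if_pos (by omega : m - m = 0)]
  refine congrArg₂ (· + ·) (Finset.sum_congr rfl fun i hi => ?_) rfl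
  simp only [Finset.mem_range] at hi
  rw [if_neg (by omega)]

end CatRec

/-- The recursion for the moment generating function of `Lₙ` under the uniform 231-avoiding
measure: `Cₙ Mₙ(λ) = Σ_{j=1}^{n-1} C_{j-1}M_{j-1}(λ) C_{n-j}M_{n-j}(λ) + e^λ C_{n-1}M_{n-1}(λ)`. -/
theorem catalan_minc_recursion (lam : ℝ) (n : ℕ) (hn : 2 ≤ n) :
    (catalan n : ℝ) * Minc n lam =
      (∑ j ∈ Finset.Icc 1 (n - 1),
        ((catalan (j - 1) : ℝ) * Minc (j - 1) lam) * ((catalan (n - j) : ℝ) * Minc (n - j) lam))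
      + Real.exp lam * ((catalan (n - 1) : ℝ) * Minc (n - 1) lam) := by
  obtain ⟨m, rfl⟩ : ∃ m, n = m + 1 := ⟨n - 1, by omega⟩
  rw [CatRec.catalan_mul_minc, CatRec.sumE_rec]
  simp only [Nat.add_sub_cancel]
  congr 1
  · rw [show Finset.Icc 1 m = Finset.Ico 1 (m + 1) from (Finset.Ico_add_one_right_eq_Icc 1 m).symm,
      Finset.sum_Ico_eq_sum_range]
    simp only [Nat.add_sub_cancel]
    refine Finset.sum_congr rfl fun i hi => ?_
    simp only [Finset.mem_range] at hi
    rw [show 1 + i - 1 = i from by omega, show m + 1 - (1 + i) = m - i from by omega,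
      CatRec.catalan_mul_minc, CatRec.catalan_mul_minc]
  · rw [CatRec.catalan_mul_minc]
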